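/- Let Λ be a full-rank lattice in ℝ^n and let R(Λ) = sup_{y ∈ ℝ^n} inf_{x ∈ Λ} ‖y − x‖ be its covering radius. Then: (a) for every v ∈ Λ there exists x ∈ Λ with ‖2x − v‖ ≤ 2R(Λ); equivalently every coset of 2Λ in Λ contains a vector of Euclidean norm at most 2R(Λ); and consequently (b) the number of vectors w ∈ Λ with ‖w‖ ≤ 2R(Λ) is at least 2^n. -/

import Mathlib

open ZSpan Submodule


/-- Covering radius lemma for the Nebe lattice argument: (a) every coset of `2Λ` in `Λ`
contains a vector of norm at most `2R(Λ)`; (b) hence there are at least `2^n` vectors of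
`Λ` of norm at most `2R(Λ)`. -/
theorem stmt_14 {n : ℕ} (Λ : Submodule ℤ (EuclideanSpace ℝ (Fin n)))
    [DiscreteTopology Λ] [IsZLattice ℝ Λ]
    (R : ℝ)
    (hR : R = ⨆ y : EuclideanSpace ℝ (Fin n), ⨅ x : Λ, ‖y - (x : EuclideanSpace ℝ (Fin n))‖) :
    (∀ v ∈ Λ, ∃ x ∈ Λ, ‖(2 : ℝ) • x - v‖ ≤ 2 * R) ∧
    ({w : EuclideanSpace ℝ (Fin n) | w ∈ Λ ∧ ‖w‖ ≤ 2 * R}.Finite ∧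
      2 ^ n ≤ {w : EuclideanSpace ℝ (Fin n) | w ∈ Λ ∧ ‖w‖ ≤ 2 * R}.ncard) := by
  classical
  set E := EuclideanSpace ℝ (Fin n) with hE
  haveI : Module.Free ℤ Λ := ZLattice.module_free ℝ Λ
  haveI : Module.Finite ℤ Λ := ZLattice.module_finite ℝ Λ
  set ι := Module.Free.ChooseBasisIndex ℤ Λ with hι
  set b : Module.Basis ι ℤ Λ := Module.Free.chooseBasis ℤ Λ with hb
  set B : Module.Basis ι ℝ E := Module.Basis.ofZLatticeBasis ℝ Λ b with hB
  have hspan : span ℤ (Set.range B) = Λ := b.ofZLatticeBasis_span ℝ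
  haveI : DiscreteTopology Λ.toAddSubgroup := ‹DiscreteTopology Λ›
  have hclosed : IsClosed (Λ : Set E) :=
    AddSubgroup.isClosed_of_discrete (H := Λ.toAddSubgroup)
  -- boundedness of the family
  have hbdd : BddAbove (Set.range fun y : E => ⨅ x : Λ, ‖y - (x : E)‖) := by
    refine ⟨∑ i, ‖B i‖, ?_⟩
    rintro _ ⟨y, rfl⟩
    have hfl : (ZSpan.floor B y : E) ∈ Λ := by
      exact hspan.le (ZSpan.floor B y).2
    refine le_trans (ciInf_le ⟨0, by rintro _ ⟨x, rfl⟩; positivity⟩ (⟨_, hfl⟩ : Λ)) ?_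
    have : y - (ZSpan.floor B y : E) = ZSpan.fract B y := (ZSpan.fract_apply B y).symm
    rw [this]
    exact ZSpan.norm_fract_le B y
  have key : ∀ y : E, ∃ x ∈ Λ, ‖y - x‖ ≤ R := by
    intro y
    obtain ⟨x, hxΛ, hx⟩ := hclosed.exists_infDist_eq_dist ⟨0, Λ.zero_mem⟩ y
    refine ⟨x, hxΛ, ?_⟩
    rw [← dist_eq_norm, ← hx, Metric.infDist_eq_iInf, hR]
    simp_rw [dist_eq_norm (E := E)]
    exact le_ciSup hbdd y
  have partA : ∀ v ∈ Λ, ∃ x ∈ Λ, ‖(2 : ℝ) • x - v‖ ≤ 2 * R := by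
    intro v hv
    obtain ⟨x, hxΛ, hx⟩ := key ((2 : ℝ)⁻¹ • v)
    refine ⟨x, hxΛ, ?_⟩
    have h2 : (2 : ℝ) • x - v = (2 : ℝ) • (x - (2 : ℝ)⁻¹ • v) := by
      rw [smul_sub, smul_inv_smul₀ two_ne_zero]
    rw [h2, norm_smul, norm_sub_rev]
    simp only [Real.norm_ofNat]
    nlinarith [norm_nonneg ((2:ℝ)⁻¹ • v - x)]
  refine ⟨partA, ?_, ?_⟩
  · refine (Metric.finite_isBounded_inter_isClosed (K := Metric.closedBall (0:E) (2*R))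
      ((isDiscrete_iff_discreteTopology (s := (Λ : Set E))).mpr ‹DiscreteTopology Λ›)
      Metric.isBounded_closedBall hclosed).subset ?_
    intro w hw
    exact ⟨mem_closedBall_zero_iff.mpr hw.2, hw.1⟩
  · -- counting
    have hn : Fintype.card ι = n := by
      rw [← Module.finrank_eq_card_chooseBasisIndex, ZLattice.rank ℝ Λ,
        finrank_euclideanSpace_fin]
    set vv : (ι → Fin 2) → Λ := fun ε => ∑ i, ((ε i : ℕ) : ℤ) • b i with hvv
    have hx := fun ε : ι → Fin 2 => partA (vv ε) (vv ε).2
    choose x hxΛ hxle using hx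
    set X : (ι → Fin 2) → Λ := fun ε => ⟨x ε, hxΛ ε⟩ with hX
    set g : (ι → Fin 2) → E := fun ε => ((vv ε - (2:ℤ) • X ε : Λ) : E) with hg
    have hcoe : ∀ ε, g ε = (vv ε : E) - (2:ℝ) • x ε := by
      intro ε
      have h2 : (((2:ℤ) • X ε : Λ) : E) = (2:ℝ) • x ε := by
        rw [SetLike.val_smul, ← Int.cast_smul_eq_zsmul ℝ]
        norm_num [hX]
      simp only [hg, Submodule.coe_sub, h2]
    have hmem : ∀ ε, g ε ∈ {w : E | w ∈ Λ ∧ ‖w‖ ≤ 2 * R} := by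
      intro ε
      refine ⟨(vv ε - (2:ℤ) • X ε).2, ?_⟩
      rw [hcoe ε, norm_sub_rev]
      exact hxle ε
    have hinj : Function.Injective g := by
      intro ε ε' hεε
      have : vv ε - (2:ℤ) • X ε = vv ε' - (2:ℤ) • X ε' :=
        Subtype.coe_injective hεε
      funext j
      have hrepr := congrArg (fun z : Λ => b.repr z j) this
      simp only [hvv, map_sub, map_sum, map_zsmul, map_smul, Finsupp.coe_sub, Finsupp.coe_smul,
        Pi.sub_apply, Pi.smul_apply, smul_eq_mul, Module.Basis.repr_self] at hrepr
      rw [Finset.sum_apply', Finset.sum_apply'] at hrepr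
      simp only [Finsupp.smul_apply, Finsupp.single_apply, smul_eq_mul, mul_ite, mul_one,
        mul_zero, Finset.sum_ite_eq', Finset.mem_univ, if_true] at hrepr
      have h1 : ((ε j : ℕ) : ℤ) - 2 * b.repr (X ε) j
          = ((ε' j : ℕ) : ℤ) - 2 * b.repr (X ε') j := by linarith [hrepr]
      have e1 : (ε j : ℕ) < 2 := (ε j).2
      have e2 : (ε' j : ℕ) < 2 := (ε' j).2
      have : (ε j : ℕ) = (ε' j : ℕ) := by omega
      exact Fin.ext this
    have hfin : {w : E | w ∈ Λ ∧ ‖w‖ ≤ 2 * R}.Finite := by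
      refine (Metric.finite_isBounded_inter_isClosed (K := Metric.closedBall (0:E) (2*R))
        ((isDiscrete_iff_discreteTopology (s := (Λ : Set E))).mpr ‹DiscreteTopology Λ›)
        Metric.isBounded_closedBall hclosed).subset ?_
      intro w hw
      exact ⟨mem_closedBall_zero_iff.mpr hw.2, hw.1⟩
    have hsub : ↑(Finset.univ.image g) ⊆ {w : E | w ∈ Λ ∧ ‖w‖ ≤ 2 * R} := by
      intro w hw
      simp only [Finset.coe_image, Finset.coe_univ, Set.image_univ, Set.mem_range] at hw
      obtain ⟨ε, rfl⟩ := hw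
      exact hmem ε
    calc 2 ^ n = Fintype.card (ι → Fin 2) := by simp [hn]
      _ = (Finset.univ.image g).card := by
          rw [Finset.card_image_of_injective _ hinj, Finset.card_univ]
      _ = (↑(Finset.univ.image g) : Set E).ncard := (Set.ncard_coe_finset _).symm
      _ ≤ _ := Set.ncard_le_ncard hsub hfin
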